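/- Uniform bound on nearest-neighbor Green's functions: for every β > 0, ε > 0, L ≥ 2, every t : Λ → ℝ, and every collection of n pairwise distinct nearest-neighbor pairs (x₁,y₁), …, (xₙ,yₙ), the n×n matrix K with entries K_{ij} = β [F_{x_i y_i}; D_{β,ε}(t)^{-1} F_{x_j y_j}], where F_{xy} = e^{(t_x+t_y)/2}(δ_x − δ_y), satisfies 0 ≤ K ≤ Id in the Loewner order. In particular, for a single nearest-neighbor pair (x,y), 0 ≤ β e^{t_x+t_y} [(δ_x − δ_y); D_{β,ε}(t)^{-1} (δ_x − δ_y)] ≤ 1. -/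

import Mathlib

open scoped BigOperators Classical
open MeasureTheory

noncomputable section

/-- The 3-dimensional discrete torus of side `L`. -/
abbrev Torus (L : ℕ) := Fin 3 → ZMod L

/-- The unit vector in direction `i`. -/
def unitVec (L : ℕ) (i : Fin 3) : Torus L := fun j => if j = i then 1 else 0

/-- Nearest-neighbor relation on the torus. -/
def NN {L : ℕ} (x y : Torus L) : Prop :=
  x ≠ y ∧ ∃ i : Fin 3, y = x + unitVec L i ∨ y = x - unitVec L i

/-- Periodic (Euclidean) distance on the torus. -/
def torusDist {L : ℕ} (x y : Torus L) : ℝ :=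
  Real.sqrt (∑ i : Fin 3, (min ((x i - y i).val) (L - (x i - y i).val) : ℝ) ^ 2)

variable {L : ℕ}

/-- Sum of a (symmetric) function over unordered nearest-neighbor pairs. -/
def nnSum [NeZero L] (f : Torus L → Torus L → ℝ) : ℝ :=
  (1 / 2) * ∑ x : Torus L, ∑ y : Torus L, if NN x y then f x y else 0

/-- The matrix of the operator `D_{β,ε}(t)`, the symmetric operator on `ℝ^Λ` with
quadratic form `β ∑_{NN (ij)} e^{t_i+t_j}(v_i-v_j)² + ε ∑_k e^{t_k} v_k²`. -/
def Dmat [NeZero L] (β ε : ℝ) (t : Torus L → ℝ) : Matrix (Torus L) (Torus L) ℝ :=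
  Matrix.of fun j k =>
    if j = k then
      β * (∑ i : Torus L, if NN i j then Real.exp (t i + t j) else 0) + ε * Real.exp (t j)
    else if NN j k then -(β * Real.exp (t j + t k)) else 0

/-- The free energy (effective action) `F_{β,ε}(t)`. -/
def freeEnergy [NeZero L] (β ε : ℝ) (t : Torus L → ℝ) : ℝ :=
  β * nnSum (fun i j => Real.cosh (t i - t j) - 1)
    - (1 / 2) * Real.log (Dmat β ε t).det
    + ∑ k : Torus L, (t k - ε + ε * Real.cosh (t k))

/-- The expectation `⟨f⟩ = ∫ f(t) e^{-F_{β,ε}(t)} ∏ dt_k/√(2π)`. -/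
def expect [NeZero L] (β ε : ℝ) (f : (Torus L → ℝ) → ℝ) : ℝ :=
  ∫ t : Torus L → ℝ,
    f t * Real.exp (-(freeEnergy β ε t)) *
      ((Real.sqrt (2 * Real.pi))⁻¹) ^ (Fintype.card (Torus L))

/-- The coordinate unit vector `δ_x`. -/
def delta {L : ℕ} (x : Torus L) : Torus L → ℝ := fun j => if j = x then 1 else 0

/-- `[u ; G v] = ∑_{a,b} u_a G_{ab} v_b`. -/
def qform [NeZero L] (G : Matrix (Torus L) (Torus L) ℝ) (u v : Torus L → ℝ) : ℝ :=
  ∑ a : Torus L, ∑ b : Torus L, u a * G a b * v b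

/-- `F_{xy} = e^{(t_x+t_y)/2}(δ_x - δ_y)`. -/
def Fvec {L : ℕ} (t : Torus L → ℝ) (x y : Torus L) : Torus L → ℝ :=
  fun j => Real.exp ((t x + t y) / 2) * (delta x j - delta y j)

-- auxiliary
open Matrix

lemma NN_symm {x y : Torus L} (h : NN x y) : NN y x := by
  obtain ⟨hne, i, h1 | h1⟩ := h
  · exact ⟨hne.symm, i, Or.inr (by rw [h1, add_sub_cancel_right])⟩
  · exact ⟨hne.symm, i, Or.inl (by rw [h1, sub_add_cancel])⟩

lemma not_NN_self (x : Torus L) : ¬ NN x x := fun h => h.1 rfl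

/-- Edge weight. -/
def Ew (t : Torus L → ℝ) : Torus L → Torus L → ℝ :=
  fun j k => if NN j k then Real.exp (t j + t k) else 0

lemma Ew_nonneg (t : Torus L → ℝ) (j k : Torus L) : 0 ≤ Ew t j k := by
  unfold Ew; split_ifs
  · exact (Real.exp_pos _).le
  · exact le_rfl

lemma Ew_symm (t : Torus L → ℝ) (j k : Torus L) : Ew t j k = Ew t k j := by
  unfold Ew
  by_cases h : NN j k
  · rw [if_pos h, if_pos (NN_symm h), add_comm]
  · rw [if_neg h, if_neg (fun hh => h (NN_symm hh))]

lemma Ew_self (t : Torus L → ℝ) (j : Torus L) : Ew t j j = 0 :=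
  if_neg (not_NN_self j)

lemma dmat_apply [NeZero L] (β ε : ℝ) (t : Torus L → ℝ) (j k : Torus L) :
    Dmat β ε t j k =
      (if j = k then β * (∑ i : Torus L, Ew t i j) + ε * Real.exp (t j) else 0)
        - β * Ew t j k := by
  unfold Dmat Ew
  by_cases h : j = k
  · subst h
    simp [not_NN_self j]
  · simp only [Matrix.of_apply, if_neg h]
    by_cases hnn : NN j k
    · rw [if_pos hnn, if_pos hnn]; ring
    · rw [if_neg hnn, if_neg hnn]; ring

lemma dmat_symm [NeZero L] (β ε : ℝ) (t : Torus L → ℝ) (j k : Torus L) :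
    Dmat β ε t k j = Dmat β ε t j k := by
  rw [dmat_apply, dmat_apply, Ew_symm t k j]
  by_cases h : j = k
  · subst h; rfl
  · rw [if_neg h, if_neg (Ne.symm h)]

lemma dmat_isHermitian [NeZero L] (β ε : ℝ) (t : Torus L → ℝ) : (Dmat β ε t).IsHermitian := by
  ext j k
  simpa using dmat_symm β ε t j k

lemma ew_swap [NeZero L] (t : Torus L → ℝ) (w : Torus L → ℝ) :
    (∑ j : Torus L, ∑ k : Torus L, Ew t j k * w k)
      = ∑ j : Torus L, ∑ k : Torus L, Ew t j k * w j := by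
  rw [Finset.sum_comm]
  exact Finset.sum_congr rfl fun a _ => Finset.sum_congr rfl fun b _ => by rw [Ew_symm]

lemma ew_swap_sq [NeZero L] (t : Torus L → ℝ) (v : Torus L → ℝ) :
    (∑ j : Torus L, ∑ k : Torus L, Ew t j k * (v k * v k))
      = ∑ j : Torus L, ∑ k : Torus L, Ew t j k * (v j * v j) := by
  rw [Finset.sum_comm]
  exact Finset.sum_congr rfl fun a _ => Finset.sum_congr rfl fun b _ => by rw [Ew_symm]

lemma dmat_quad [NeZero L] (β ε : ℝ) (t : Torus L → ℝ) (v : Torus L → ℝ) :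
    v ⬝ᵥ (Dmat β ε t *ᵥ v) =
      (β / 2) * ∑ j : Torus L, ∑ k : Torus L, Ew t j k * (v j - v k) ^ 2
        + ε * ∑ k : Torus L, Real.exp (t k) * (v k * v k) := by
  classical
  have expand : v ⬝ᵥ (Dmat β ε t *ᵥ v)
      = ∑ j : Torus L, ∑ k : Torus L, v j * Dmat β ε t j k * v k := by
    simp [dotProduct, Matrix.mulVec, Finset.mul_sum, mul_assoc]
  have key : ∀ j k : Torus L, v j * Dmat β ε t j k * v k =
      (if j = k then (β * (∑ i : Torus L, Ew t i j) + ε * Real.exp (t j)) * (v j * v k) else 0)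
        - β * (Ew t j k * (v j * v k)) := by
    intro j k
    rw [dmat_apply]
    by_cases h : j = k
    · rw [if_pos h, if_pos h]; ring
    · rw [if_neg h, if_neg h]; ring
  have step1 : ∑ j : Torus L, ∑ k : Torus L, v j * Dmat β ε t j k * v k
      = (∑ j : Torus L, (β * (∑ i : Torus L, Ew t i j) + ε * Real.exp (t j)) * (v j * v j))
        - β * ∑ j : Torus L, ∑ k : Torus L, Ew t j k * (v j * v k) := by
    have hj : ∀ j : Torus L, ∑ k : Torus L, v j * Dmat β ε t j k * v k
        = (β * (∑ i : Torus L, Ew t i j) + ε * Real.exp (t j)) * (v j * v j)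
          - β * ∑ k : Torus L, Ew t j k * (v j * v k) := by
      intro j
      have e1 : ∑ k : Torus L, v j * Dmat β ε t j k * v k
          = ∑ k : Torus L,
              ((if j = k then
                  (β * (∑ i : Torus L, Ew t i j) + ε * Real.exp (t j)) * (v j * v k) else 0)
                - β * (Ew t j k * (v j * v k))) :=
        Finset.sum_congr rfl fun k _ => key j k
      rw [e1, Finset.sum_sub_distrib, ← Finset.mul_sum]
      congr 1
      simp
    rw [Finset.sum_congr rfl fun j _ => hj j, Finset.sum_sub_distrib, ← Finset.mul_sum]
  have step2 : (∑ j : Torus L, (β * (∑ i : Torus L, Ew t i j) + ε * Real.exp (t j)) * (v j * v j))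
      = β * (∑ j : Torus L, ∑ k : Torus L, Ew t j k * (v j * v j))
        + ε * ∑ k : Torus L, Real.exp (t k) * (v k * v k) := by
    calc (∑ j : Torus L, (β * (∑ i : Torus L, Ew t i j) + ε * Real.exp (t j)) * (v j * v j))
        = ∑ j : Torus L, (β * (∑ i : Torus L, Ew t i j * (v j * v j))
            + ε * (Real.exp (t j) * (v j * v j))) := by
          refine Finset.sum_congr rfl fun j _ => ?_
          rw [add_mul, mul_assoc β, mul_assoc ε, Finset.sum_mul]
      _ = β * (∑ j : Torus L, ∑ i : Torus L, Ew t i j * (v j * v j))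
            + ε * ∑ k : Torus L, Real.exp (t k) * (v k * v k) := by
          rw [Finset.sum_add_distrib, ← Finset.mul_sum, ← Finset.mul_sum]
      _ = β * (∑ j : Torus L, ∑ k : Torus L, Ew t j k * (v j * v j))
            + ε * ∑ k : Torus L, Real.exp (t k) * (v k * v k) := by
          congr 1
          congr 1
          exact Finset.sum_comm.trans (ew_swap_sq t v)
  have step3 : ∑ j : Torus L, ∑ k : Torus L, Ew t j k * (v j - v k) ^ 2
      = 2 * (∑ j : Torus L, ∑ k : Torus L, Ew t j k * (v j * v j))
        - 2 * (∑ j : Torus L, ∑ k : Torus L, Ew t j k * (v j * v k)) := by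
    calc ∑ j : Torus L, ∑ k : Torus L, Ew t j k * (v j - v k) ^ 2
        = ∑ j : Torus L, ∑ k : Torus L,
            (Ew t j k * (v j * v j) + Ew t j k * (v k * v k)
              - 2 * (Ew t j k * (v j * v k))) :=
          Finset.sum_congr rfl fun j _ => Finset.sum_congr rfl fun k _ => by ring
      _ = ∑ j : Torus L, ((∑ k : Torus L, Ew t j k * (v j * v j))
            + (∑ k : Torus L, Ew t j k * (v k * v k))
            - 2 * ∑ k : Torus L, Ew t j k * (v j * v k)) := by
          refine Finset.sum_congr rfl fun j _ => ?_
          rw [Finset.sum_sub_distrib, Finset.sum_add_distrib, ← Finset.mul_sum]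
      _ = (∑ j : Torus L, ∑ k : Torus L, Ew t j k * (v j * v j))
            + (∑ j : Torus L, ∑ k : Torus L, Ew t j k * (v k * v k))
            - 2 * ∑ j : Torus L, ∑ k : Torus L, Ew t j k * (v j * v k) := by
          rw [Finset.sum_sub_distrib, Finset.sum_add_distrib, ← Finset.mul_sum]
      _ = 2 * (∑ j : Torus L, ∑ k : Torus L, Ew t j k * (v j * v j))
            - 2 * (∑ j : Torus L, ∑ k : Torus L, Ew t j k * (v j * v k)) := by
          rw [ew_swap_sq]; ring
  rw [expand, step1, step2, step3]
  ring

lemma dmat_posDef [NeZero L] {β ε : ℝ} (hβ : 0 < β) (hε : 0 < ε) (t : Torus L → ℝ) :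
    (Dmat β ε t).PosDef := by
  refine Matrix.PosDef.of_dotProduct_mulVec_pos (dmat_isHermitian β ε t) fun v hv => ?_
  have hsv : star v = v := funext fun i => star_trivial _
  rw [hsv, dmat_quad]
  obtain ⟨k0, hk0⟩ := Function.ne_iff.mp hv
  have h1 : 0 ≤ ∑ j : Torus L, ∑ k : Torus L, Ew t j k * (v j - v k) ^ 2 :=
    Finset.sum_nonneg fun j _ => Finset.sum_nonneg fun k _ =>
      mul_nonneg (Ew_nonneg t j k) (sq_nonneg _)
  have h2 : 0 < ∑ k : Torus L, Real.exp (t k) * (v k * v k) := by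
    refine Finset.sum_pos' (fun k _ => mul_nonneg (Real.exp_pos _).le (mul_self_nonneg _)) ?_
    exact ⟨k0, Finset.mem_univ _, mul_pos (Real.exp_pos _) (mul_self_pos.mpr hk0)⟩
  have := add_pos_of_nonneg_of_pos
    (mul_nonneg (by linarith : (0:ℝ) ≤ β / 2) h1) (mul_pos hε h2)
  linarith

lemma green_bound_aux (β ε : ℝ) (hβ : 0 < β) (hε : 0 < ε) [NeZero L]
    (t : Torus L → ℝ) (n : ℕ) (x y : Fin n → Torus L)
    (hNN : ∀ i, NN (x i) (y i))
    (hdistinct : Function.Injective fun i => s(x i, y i)) :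
    (Matrix.of fun i j : Fin n =>
        β * qform (Dmat β ε t)⁻¹ (Fvec t (x i) (y i)) (Fvec t (x j) (y j))).PosSemidef ∧
    ((1 : Matrix (Fin n) (Fin n) ℝ) - Matrix.of fun i j : Fin n =>
        β * qform (Dmat β ε t)⁻¹ (Fvec t (x i) (y i)) (Fvec t (x j) (y j))).PosSemidef := by
  classical
  set D := Dmat β ε t with hDdef
  have hD : D.PosDef := dmat_posDef hβ hε t
  set G := D⁻¹ with hGdef
  have hG : G.PosDef := hD.inv
  have hdet : IsUnit D.det := hD.det_pos.ne'.isUnit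
  set B : Matrix (Torus L) (Fin n) ℝ := Matrix.of (fun a i => Fvec t (x i) (y i) a) with hBdef
  set K : Matrix (Fin n) (Fin n) ℝ :=
    Matrix.of (fun i j => β * qform G (Fvec t (x i) (y i)) (Fvec t (x j) (y j))) with hKdef
  have hGsymm : Gᵀ = G := by
    have h : Gᴴ = G := hG.isHermitian
    rwa [Matrix.conjTranspose_eq_transpose_of_trivial] at h
  have hKmat : K = β • (Bᵀ * G * B) := by
    ext i j
    show β * qform G (Fvec t (x i) (y i)) (Fvec t (x j) (y j)) = _
    rw [Matrix.smul_apply, smul_eq_mul]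
    congr 1
    rw [Matrix.mul_apply]
    unfold qform
    rw [Finset.sum_comm]
    refine Finset.sum_congr rfl fun b _ => ?_
    rw [Matrix.mul_apply, Finset.sum_mul]
    refine Finset.sum_congr rfl fun a _ => ?_
    simp only [Matrix.transpose_apply, hBdef, Matrix.of_apply]
  have hKherm : K.IsHermitian := by
    rw [hKmat]
    show _ = _
    rw [Matrix.conjTranspose_eq_transpose_of_trivial, Matrix.transpose_smul,
      Matrix.transpose_mul, Matrix.transpose_mul, Matrix.transpose_transpose, hGsymm,
      Matrix.mul_assoc]
  have hquadK : ∀ c : Fin n → ℝ, c ⬝ᵥ (K *ᵥ c) = β * ((B *ᵥ c) ⬝ᵥ (G *ᵥ (B *ᵥ c))) := by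
    intro c
    rw [hKmat, Matrix.smul_mulVec, dotProduct_smul, smul_eq_mul]
    congr 1
    rw [Matrix.mul_assoc, ← Matrix.mulVec_mulVec, Matrix.dotProduct_mulVec,
      Matrix.vecMul_transpose, ← Matrix.mulVec_mulVec]
  have hKpsd : K.PosSemidef := by
    refine Matrix.PosSemidef.of_dotProduct_mulVec_nonneg hKherm fun c => ?_
    have hsc : star c = c := funext fun i => star_trivial _
    rw [hsc, hquadK]
    have h2 := hG.posSemidef.dotProduct_mulVec_nonneg (B *ᵥ c)
    rw [show star (B *ᵥ c) = B *ᵥ c from funext fun i => star_trivial _] at h2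
    exact mul_nonneg hβ.le h2
  -- column evaluation
  have hr : ∀ (u : Torus L → ℝ) (i : Fin n), (Bᵀ *ᵥ u) i
      = Real.exp ((t (x i) + t (y i)) / 2) * (u (x i) - u (y i)) := by
    intro u i
    show ∑ a : Torus L, Bᵀ i a * u a = _
    simp only [Matrix.transpose_apply, hBdef, Matrix.of_apply, Fvec, delta]
    have e1 : ∀ a : Torus L,
        Real.exp ((t (x i) + t (y i)) / 2) * ((if a = x i then (1:ℝ) else 0)
            - if a = y i then 1 else 0) * u a
          = Real.exp ((t (x i) + t (y i)) / 2) *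
              ((if a = x i then u a else 0) - (if a = y i then u a else 0)) := by
      intro a
      rw [show Real.exp ((t (x i) + t (y i)) / 2) * ((if a = x i then (1:ℝ) else 0)
            - if a = y i then 1 else 0) * u a
          = Real.exp ((t (x i) + t (y i)) / 2) *
              ((if a = x i then (1:ℝ) else 0) * u a - (if a = y i then (1:ℝ) else 0) * u a)
          from by ring]
      simp [ite_mul]
    rw [Finset.sum_congr rfl fun a _ => e1 a, ← Finset.mul_sum, Finset.sum_sub_distrib,
      Finset.sum_ite_eq', Finset.sum_ite_eq']
    simp
  have hBB : ∀ u : Torus L → ℝ, u ⬝ᵥ ((B * Bᵀ) *ᵥ u)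
      = ∑ i : Fin n, Real.exp (t (x i) + t (y i)) * (u (x i) - u (y i)) ^ 2 := by
    intro u
    rw [← Matrix.mulVec_mulVec, Matrix.dotProduct_mulVec, ← Matrix.mulVec_transpose]
    show ∑ i : Fin n, (Bᵀ *ᵥ u) i * (Bᵀ *ᵥ u) i = _
    refine Finset.sum_congr rfl fun i _ => ?_
    rw [hr u i, ← mul_assoc]
    rw [show Real.exp ((t (x i) + t (y i)) / 2) * (u (x i) - u (y i))
        * Real.exp ((t (x i) + t (y i)) / 2)
        = (Real.exp ((t (x i) + t (y i)) / 2) * Real.exp ((t (x i) + t (y i)) / 2))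
          * (u (x i) - u (y i)) by ring, ← Real.exp_add]
    rw [show (t (x i) + t (y i)) / 2 + (t (x i) + t (y i)) / 2 = t (x i) + t (y i) by ring]
    ring
  -- domination of the edge sums
  have hdom : ∀ u : Torus L → ℝ,
      ∑ i : Fin n, Real.exp (t (x i) + t (y i)) * (u (x i) - u (y i)) ^ 2
        ≤ (1/2) * ∑ j : Torus L, ∑ k : Torus L, Ew t j k * (u j - u k) ^ 2 := by
    intro u
    set g : Torus L × Torus L → ℝ := fun p => Ew t p.1 p.2 * (u p.1 - u p.2) ^ 2 with hgdef
    have hg0 : ∀ p, 0 ≤ g p := fun p => mul_nonneg (Ew_nonneg t _ _) (sq_nonneg _)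
    have htot : ∑ p : Torus L × Torus L, g p
        = ∑ j : Torus L, ∑ k : Torus L, Ew t j k * (u j - u k) ^ 2 := by
      rw [Fintype.sum_prod_type]
    set ι : (Fin n) ⊕ (Fin n) → Torus L × Torus L :=
      Sum.elim (fun i => (x i, y i)) (fun i => (y i, x i)) with hι
    have hinj : Function.Injective ι := by
      intro a b hab
      rcases a with a | a <;> rcases b with b | b <;>
        simp only [hι, Sum.elim_inl, Sum.elim_inr, Prod.mk.injEq] at hab
      · obtain ⟨h1, h2⟩ := hab
        exact congrArg Sum.inl (hdistinct (show s(x a, y a) = s(x b, y b) by rw [h1, h2]))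
      · obtain ⟨h1, h2⟩ := hab
        have hs : s(x a, y a) = s(x b, y b) := by rw [h1, h2, Sym2.eq_swap]
        have hab' : a = b := hdistinct hs
        exact absurd (hab' ▸ h1) (hNN b).1
      · obtain ⟨h1, h2⟩ := hab
        have hs : s(x a, y a) = s(x b, y b) := by rw [← h1, ← h2, Sym2.eq_swap]
        have hab' : a = b := hdistinct hs
        exact absurd (hab' ▸ h2) (hNN b).1
      · obtain ⟨h1, h2⟩ := hab
        exact congrArg Sum.inr (hdistinct (show s(x a, y a) = s(x b, y b) by rw [h1, h2]))
    have hsum : ∑ q : (Fin n) ⊕ (Fin n), g (ι q) ≤ ∑ p : Torus L × Torus L, g p := by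
      rw [← Finset.sum_image (fun a _ b _ h => hinj h)]
      exact Finset.sum_le_sum_of_subset_of_nonneg (Finset.subset_univ _) fun p _ _ => hg0 p
    have hval : ∑ q : (Fin n) ⊕ (Fin n), g (ι q)
        = 2 * ∑ i : Fin n, Real.exp (t (x i) + t (y i)) * (u (x i) - u (y i)) ^ 2 := by
      rw [Fintype.sum_sum_type]
      have h1 : ∀ i : Fin n, g (ι (Sum.inl i))
          = Real.exp (t (x i) + t (y i)) * (u (x i) - u (y i)) ^ 2 := by
        intro i
        show Ew t (x i) (y i) * (u (x i) - u (y i)) ^ 2 = _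
        rw [show Ew t (x i) (y i) = Real.exp (t (x i) + t (y i)) from if_pos (hNN i)]
      have h2 : ∀ i : Fin n, g (ι (Sum.inr i))
          = Real.exp (t (x i) + t (y i)) * (u (x i) - u (y i)) ^ 2 := by
        intro i
        show Ew t (y i) (x i) * (u (y i) - u (x i)) ^ 2 = _
        rw [show Ew t (y i) (x i) = Real.exp (t (x i) + t (y i)) from by
          rw [show Ew t (y i) (x i) = Ew t (x i) (y i) from (Ew_symm t (x i) (y i)).symm]
          exact if_pos (hNN i)]
        ring
      rw [Finset.sum_congr rfl fun i _ => h1 i, Finset.sum_congr rfl fun i _ => h2 i]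
      ring
    linarith
  have hMquad : ∀ u : Torus L → ℝ, β * (u ⬝ᵥ ((B * Bᵀ) *ᵥ u)) ≤ u ⬝ᵥ (D *ᵥ u) := by
    intro u
    rw [hBB u, hDdef, dmat_quad]
    have h1 := hdom u
    have h2 : 0 ≤ ε * ∑ k : Torus L, Real.exp (t k) * (u k * u k) :=
      mul_nonneg hε.le (Finset.sum_nonneg fun k _ =>
        mul_nonneg (Real.exp_pos _).le (mul_self_nonneg _))
    have h3 := mul_le_mul_of_nonneg_left h1 hβ.le
    nlinarith
  have hDu : ∀ w : Torus L → ℝ, D *ᵥ (G *ᵥ w) = w := by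
    intro w
    rw [Matrix.mulVec_mulVec, hGdef, Matrix.mul_nonsing_inv D hdet, Matrix.one_mulVec]
  have h1K : ((1 : Matrix (Fin n) (Fin n) ℝ) - K).PosSemidef := by
    refine Matrix.PosSemidef.of_dotProduct_mulVec_nonneg (Matrix.IsHermitian.sub Matrix.isHermitian_one hKherm) fun c => ?_
    have hsc : star c = c := funext fun i => star_trivial _
    rw [hsc]
    set w : Torus L → ℝ := B *ᵥ c with hw
    set u : Torus L → ℝ := G *ᵥ w with hu
    set r : Fin n → ℝ := Bᵀ *ᵥ u with hrr'
    have hwu : c ⬝ᵥ (K *ᵥ c) = β * (w ⬝ᵥ u) := hquadK c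
    have hcr : c ⬝ᵥ r = w ⬝ᵥ u := by
      rw [hrr', Matrix.dotProduct_mulVec, Matrix.vecMul_transpose, ← hw]
    have hrr2 : u ⬝ᵥ ((B * Bᵀ) *ᵥ u) = r ⬝ᵥ r := by
      rw [← Matrix.mulVec_mulVec, Matrix.dotProduct_mulVec, ← Matrix.mulVec_transpose, ← hrr']
    have hud : u ⬝ᵥ (D *ᵥ u) = w ⬝ᵥ u := by
      rw [hu, hDu w, ← hu, dotProduct_comm]
    have expand1 : c ⬝ᵥ ((1 - K) *ᵥ c) = c ⬝ᵥ c - c ⬝ᵥ (K *ᵥ c) := by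
      rw [Matrix.sub_mulVec, dotProduct_sub, Matrix.one_mulVec]
    have hs : 0 ≤ (c - β • r) ⬝ᵥ (c - β • r) :=
      Finset.sum_nonneg fun i _ => mul_self_nonneg _
    have hexp : (c - β • r) ⬝ᵥ (c - β • r)
        = c ⬝ᵥ c - 2 * β * (c ⬝ᵥ r) + β ^ 2 * (r ⬝ᵥ r) := by
      simp only [dotProduct_sub, sub_dotProduct, dotProduct_smul, smul_dotProduct,
        smul_eq_mul]
      rw [dotProduct_comm r c]
      ring
    have hM := hMquad u
    have key : c ⬝ᵥ ((1 - K) *ᵥ c)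
        = (c - β • r) ⬝ᵥ (c - β • r)
          + β * ((u ⬝ᵥ (D *ᵥ u)) - β * (u ⬝ᵥ ((B * Bᵀ) *ᵥ u))) := by
      rw [expand1, hwu, hexp, hud, hrr2, hcr]
      ring
    rw [key]
    have h5 : 0 ≤ (u ⬝ᵥ (D *ᵥ u)) - β * (u ⬝ᵥ ((B * Bᵀ) *ᵥ u)) := by linarith
    have h6 := mul_nonneg hβ.le h5
    linarith
  exact ⟨hKpsd, h1K⟩

lemma qform_Fvec [NeZero L] (G : Matrix (Torus L) (Torus L) ℝ) (t : Torus L → ℝ)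
    (x y : Torus L) :
    qform G (Fvec t x y) (Fvec t x y)
      = Real.exp (t x + t y) * qform G (delta x - delta y) (delta x - delta y) := by
  unfold qform Fvec
  rw [Finset.mul_sum]
  refine Finset.sum_congr rfl fun a _ => ?_
  rw [Finset.mul_sum]
  refine Finset.sum_congr rfl fun b _ => ?_
  simp only [Pi.sub_apply]
  rw [show Real.exp (t x + t y)
      = Real.exp ((t x + t y) / 2) * Real.exp ((t x + t y) / 2) from by
    rw [← Real.exp_add]; ring_nf]
  ring


/-- **Uniform bound on nearest-neighbor Green's functions.** For any collection of `n`
pairwise distinct nearest-neighbor pairs, the matrix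
`K_{ij} = β [F_{x_i y_i}; D_{β,ε}(t)⁻¹ F_{x_j y_j}]` satisfies `0 ≤ K ≤ Id` in the
Loewner order; in particular, for a single nearest-neighbor pair `(x', y')`,
`0 ≤ β e^{t_{x'}+t_{y'}} [(δ_{x'} - δ_{y'}); D_{β,ε}(t)⁻¹ (δ_{x'} - δ_{y'})] ≤ 1`. -/
theorem nn_green_bound (β ε : ℝ) (hβ : 0 < β) (hε : 0 < ε) (L : ℕ)
    (t : Torus (L + 2) → ℝ) (n : ℕ) (x y : Fin n → Torus (L + 2))
    (hNN : ∀ i, NN (x i) (y i))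
    (hdistinct : Function.Injective fun i => s(x i, y i)) :
    ((Matrix.of fun i j : Fin n =>
          β * qform (Dmat β ε t)⁻¹ (Fvec t (x i) (y i)) (Fvec t (x j) (y j))).PosSemidef ∧
        ((1 : Matrix (Fin n) (Fin n) ℝ) - Matrix.of fun i j : Fin n =>
          β * qform (Dmat β ε t)⁻¹ (Fvec t (x i) (y i)) (Fvec t (x j) (y j))).PosSemidef) ∧
      ∀ x' y' : Torus (L + 2), NN x' y' →
        0 ≤ β * Real.exp (t x' + t y') *
            qform (Dmat β ε t)⁻¹ (delta x' - delta y') (delta x' - delta y') ∧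
          β * Real.exp (t x' + t y') *
            qform (Dmat β ε t)⁻¹ (delta x' - delta y') (delta x' - delta y') ≤ 1 := by
  constructor
  · exact green_bound_aux β ε hβ hε t n x y hNN hdistinct
  · intro x' y' hNN'
    have haux := green_bound_aux β ε hβ hε t 1 (fun _ => x') (fun _ => y')
      (fun _ => hNN') (fun a b _ => Subsingleton.elim a b)
    have e0 := haux.1.dotProduct_mulVec_nonneg (fun _ => (1:ℝ))
    have e1 := haux.2.dotProduct_mulVec_nonneg (fun _ => (1:ℝ))
    simp only [Matrix.mulVec, dotProduct, Fin.sum_univ_one, Matrix.of_apply, star,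
      Matrix.sub_apply, Matrix.one_apply_eq, one_mul, mul_one, Pi.star_apply,
      star_trivial, id_eq] at e0 e1
    rw [qform_Fvec] at e0 e1
    constructor
    · nlinarith [e0]
    · nlinarith [e1]

end
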